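/- arXiv:1502.01336 — 3 statements merged into one kernel-verified Lean document; each statement's English description precedes it below -/
import Mathlib

section
/- Let ν > 1 and 0 < r_− < r_+ be real numbers, s = √(r_+ r_− (ν²+3)), a = 2ν r_+ − s, R²(r) = (r/4)[3(ν²−1)r + (ν²+3)(r_+ + r_−) − 4ν s], and r_C = (4ν² r_+ − (ν²+3) r_−)/(3(ν²−1)). Then a²·(ν²+3)·(r_C − r_+)(r_C − r_−) = (a·(2ν r_C − s) − 4R²(r_C))². Equivalently, if R²(r_C) > 0, then N²(r_C) = R²(r_C)·(N^θ(r_C) + Ω_H)², i.e. the Killing vector χ = ∂_t + Ω_H ∂_θ is null exactly at the speed-of-light surface r = r_C. -/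
/-- For the spacelike stretched warped AdS₃ black hole, with `a = 2νr₊ − s` and
`r_C` the speed-of-light surface radius, the identity
`a²(ν²+3)(r_C − r₊)(r_C − r₋) = (a(2νr_C − s) − 4R²(r_C))²` holds; equivalently,
if `R²(r_C) > 0`, then `N²(r_C) = R²(r_C)(N^θ(r_C) + Ω_H)²`, i.e. the Killing
vector `χ = ∂_t + Ω_H ∂_θ` is null exactly at `r = r_C`. -/
theorem killing_vector_null_at_speed_of_light_surface
    (ν rm rp : ℝ) (hν : 1 < ν) (hrm : 0 < rm) (hrmp : rm < rp)
    (s : ℝ) (hs : s = Real.sqrt (rp * rm * (ν ^ 2 + 3)))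
    (a : ℝ) (ha : a = 2 * ν * rp - s)
    (Rsq Nsq Nθ : ℝ → ℝ)
    (hR : ∀ r, Rsq r = (r / 4) * (3 * (ν ^ 2 - 1) * r + (ν ^ 2 + 3) * (rp + rm) - 4 * ν * s))
    (hNsq : ∀ r, Nsq r = (ν ^ 2 + 3) * (r - rp) * (r - rm) / (4 * Rsq r))
    (hNθ : ∀ r, Nθ r = (2 * ν * r - s) / (2 * Rsq r))
    (ΩH : ℝ) (hΩH : ΩH = -2 / (2 * ν * rp - s))
    (rC : ℝ) (hrC : rC = (4 * ν ^ 2 * rp - (ν ^ 2 + 3) * rm) / (3 * (ν ^ 2 - 1))) :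
    a ^ 2 * (ν ^ 2 + 3) * (rC - rp) * (rC - rm)
        = (a * (2 * ν * rC - s) - 4 * Rsq rC) ^ 2 ∧
      (0 < Rsq rC → Nsq rC = Rsq rC * (Nθ rC + ΩH) ^ 2) := by
  have hrp : 0 < rp := lt_trans hrm hrmp
  have hν1 : (0:ℝ) < ν ^ 2 - 1 := by nlinarith
  have hs2 : s ^ 2 = rp * rm * (ν ^ 2 + 3) := by
    rw [hs, Real.sq_sqrt (by positivity)]
  have hsnn : 0 ≤ s := hs ▸ Real.sqrt_nonneg _
  have h2 : s < 2 * ν * rp := by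
    rw [hs]
    have : rp * rm * (ν ^ 2 + 3) < (2 * ν * rp) ^ 2 := by
      nlinarith [mul_pos hrp hrm, mul_lt_mul_of_pos_left hrmp hrp, sq_nonneg rp]
    calc Real.sqrt (rp * rm * (ν ^ 2 + 3)) < Real.sqrt ((2 * ν * rp) ^ 2) :=
          Real.sqrt_lt_sqrt (by positivity) this
      _ = 2 * ν * rp := Real.sqrt_sq (by positivity)
  have hapos : 0 < a := by rw [ha]; linarith
  have key : a ^ 2 * (ν ^ 2 + 3) * (rC - rp) * (rC - rm)
      = (a * (2 * ν * rC - s) - 4 * Rsq rC) ^ 2 := by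
    have hrCl : 3 * (ν ^ 2 - 1) * rC = 4 * ν ^ 2 * rp - (ν ^ 2 + 3) * rm := by
      rw [hrC]; field_simp
    have h4 : ((3 * (ν ^ 2 - 1)) ^ 4 : ℝ) ≠ 0 := by positivity
    have key2 : ((3 * (ν ^ 2 - 1)) ^ 4 : ℝ) *
        (a ^ 2 * (ν ^ 2 + 3) * (rC - rp) * (rC - rm)
          - (a * (2 * ν * rC - s) - 4 * Rsq rC) ^ 2) = 0 := by
      rw [hR, ha]
      linear_combination
        (243*rC^3 + 81*s^2*rC + (-486)*rp*rC^2 + (-81)*rp*s^2 + 243*rp^2*rC + (-243)*rm*rC^2 +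
          243*rm*rp^2 + 324*ν*s*rC^2 + 108*ν*s^3 + (-324)*ν*rp*s*rC + (-324)*ν*rm*rp*s +
          (-1215)*ν^2*rC^3 + (-324)*ν^2*s^2*rC + 2106*ν^2*rp*rC^2 + 108*ν^2*rp*s^2 +
          (-891)*ν^2*rp^2*rC + 891*ν^2*rm*rC^2 + (-243)*ν^2*rm*rp^2 + (-1296)*ν^3*s*rC^2 +
          (-324)*ν^3*s^3 + 1296*ν^3*rp*s*rC + 864*ν^3*rm*rp*s + 2430*ν^4*rC^3 +
          486*ν^4*s^2*rC + (-3564)*ν^4*rp*rC^2 + 162*ν^4*rp*s^2 + 1134*ν^4*rp^2*rC +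
          (-1134)*ν^4*rm*rC^2 + (-594)*ν^4*rm*rp^2 + 1944*ν^5*s*rC^2 + 324*ν^5*s^3 +
          (-1944)*ν^5*rp*s*rC + (-648)*ν^5*rm*rp*s + (-2430)*ν^6*rC^3 + (-324)*ν^6*s^2*rC
          + 2916*ν^6*rp*rC^2 + (-324)*ν^6*rp*s^2 + (-486)*ν^6*rp^2*rC + 486*ν^6*rm*rC^2 +
          810*ν^6*rm*rp^2 + (-1296)*ν^7*s*rC^2 + (-108)*ν^7*s^3 + 1296*ν^7*rp*s*rC +
          1215*ν^8*rC^3 + 81*ν^8*s^2*rC + (-1134)*ν^8*rp*rC^2 + 135*ν^8*rp*s^2 +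
          (-81)*ν^8*rp^2*rC + 81*ν^8*rm*rC^2 + (-81)*ν^8*rm*rp^2 + 324*ν^9*s*rC^2 +
          (-324)*ν^9*rp*s*rC + 108*ν^9*rm*rp*s + (-243)*ν^10*rC^3 + 162*ν^10*rp*rC^2 +
          81*ν^10*rp^2*rC + (-81)*ν^10*rm*rC^2 + (-135)*ν^10*rm*rp^2) * hrCl
        + ((-81)*s^2 + 243*rm*rp + 324*ν*rp*s + (-324)*ν*rm*s + 324*ν^2*s^2 + (-648)*ν^2*rp^2 +
          (-243)*ν^2*rm*rp + (-864)*ν^3*rp*s + 864*ν^3*rm*s + (-486)*ν^4*s^2 +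
          1728*ν^4*rp^2 + (-594)*ν^4*rm*rp + 648*ν^5*rp*s + (-648)*ν^5*rm*s + 324*ν^6*s^2
          + (-1296)*ν^6*rp^2 + 810*ν^6*rm*rp + (-81)*ν^8*s^2 + (-81)*ν^8*rm*rp +
          (-108)*ν^9*rp*s + 108*ν^9*rm*s + 216*ν^10*rp^2 + (-135)*ν^10*rm*rp) * hs2
    have := (mul_eq_zero.mp key2).resolve_left h4
    linarith [this]
  refine ⟨key, fun hRpos => ?_⟩
  have hRne : Rsq rC ≠ 0 := ne_of_gt hRpos
  have hane : a ≠ 0 := ne_of_gt hapos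
  rw [hNsq, hNθ, hΩH, ← ha]
  field_simp
  linear_combination 4 * key
end

section
/- Let ν > 1 and 0 < r_− < r_+ be real numbers, s = √(r_+ r_− (ν²+3)), Ω_H = −2/(2ν r_+ − s), and r_C = (4ν² r_+ − (ν²+3) r_−)/(3(ν²−1)). Suppose R²(r) > 0 for all r in [r_+, r_C]. Then for every r with r_+ < r < r_C one has R²(r)·(N^θ(r) + Ω_H)² < N²(r), i.e. the horizon-generating Killing vector χ = ∂_t + Ω_H ∂_θ is timelike in the open region between the outer horizon and the speed-of-light surface; and for every r > r_C with R²(r) > 0 one has R²(r)·(N^θ(r) + Ω_H)² > N²(r), i.e. χ is spacelike beyond the speed-of-light surface. -/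
/-- For the spacelike stretched warped AdS₃ black hole, assuming `R² > 0` on
`[r₊, r_C]`, the horizon-generating Killing vector `χ = ∂_t + Ω_H ∂_θ` is timelike
strictly between the outer horizon and the speed-of-light surface
(`R²(N^θ+Ω_H)² < N²` for `r₊ < r < r_C`) and spacelike beyond it
(`R²(N^θ+Ω_H)² > N²` for `r > r_C` with `R²(r) > 0`). -/
theorem killing_vector_timelike_between_horizon_and_sls
    (ν rm rp : ℝ) (hν : 1 < ν) (hrm : 0 < rm) (hrmp : rm < rp)
    (s : ℝ) (hs : s = Real.sqrt (rp * rm * (ν ^ 2 + 3)))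
    (ΩH : ℝ) (hΩH : ΩH = -2 / (2 * ν * rp - s))
    (rC : ℝ) (hrC : rC = (4 * ν ^ 2 * rp - (ν ^ 2 + 3) * rm) / (3 * (ν ^ 2 - 1)))
    (Rsq Nsq Nθ : ℝ → ℝ)
    (hR : ∀ r, Rsq r = (r / 4) * (3 * (ν ^ 2 - 1) * r + (ν ^ 2 + 3) * (rp + rm) - 4 * ν * s))
    (hNsq : ∀ r, Nsq r = (ν ^ 2 + 3) * (r - rp) * (r - rm) / (4 * Rsq r))
    (hNθ : ∀ r, Nθ r = (2 * ν * r - s) / (2 * Rsq r))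
    (hRpos : ∀ r, rp ≤ r → r ≤ rC → 0 < Rsq r) :
    (∀ r, rp < r → r < rC → Rsq r * (Nθ r + ΩH) ^ 2 < Nsq r) ∧
      (∀ r, rC < r → 0 < Rsq r → Nsq r < Rsq r * (Nθ r + ΩH) ^ 2) := by
  have hrp : 0 < rp := hrm.trans hrmp
  have hB : 0 < ν ^ 2 - 1 := by nlinarith
  have hs0 : 0 ≤ s := hs ▸ Real.sqrt_nonneg _
  have hs2 : s ^ 2 = rp * rm * (ν ^ 2 + 3) := by
    rw [hs]; exact Real.sq_sqrt (by positivity)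
  have hD : 0 < 2 * ν * rp - s := by
    have h1 : 0 < 4 * ν ^ 2 * rp - (ν ^ 2 + 3) * rm := by nlinarith
    have h2 : s ^ 2 < (2 * ν * rp) ^ 2 := by nlinarith [mul_pos hrp h1]
    have h3 : s < 2 * ν * rp := lt_of_pow_lt_pow_left₀ 2 (by positivity) h2
    linarith
  have hDne : (2 * ν * rp - s) ≠ 0 := ne_of_gt hD
  have hCp : rp < rC := by
    rw [hrC, lt_div_iff₀ (by positivity)]; nlinarith
  have h3B : 4 * ν ^ 2 * rp - (ν ^ 2 + 3) * rm = 3 * (ν ^ 2 - 1) * rC := by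
    rw [hrC]; field_simp
  -- positivity of the linear coefficient in the quadratic factor K
  have hc : 0 < (7 * ν ^ 2 - 3) * rp + (ν ^ 2 + 3) * rm - 4 * ν * s := by
    have hL : 0 < (7 * ν ^ 2 - 3) * rp + (ν ^ 2 + 3) * rm := by nlinarith
    have hsq : (4 * ν * s) ^ 2 < ((7 * ν ^ 2 - 3) * rp + (ν ^ 2 + 3) * rm) ^ 2 := by
      nlinarith [sq_nonneg ((7 * ν ^ 2 - 3) * rp - (ν ^ 2 + 3) * rm),
        mul_pos (mul_pos hrp hrm) hB, mul_pos hrp hrm]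
    have := lt_of_pow_lt_pow_left₀ 2 hL.le hsq
    linarith
  -- master computation for a fixed r with Rsq r > 0
  have main : ∀ r : ℝ, 0 < Rsq r →
      Rsq r * (Nθ r + ΩH) ^ 2 - Nsq r =
        ((r - rp) * (3 * (ν ^ 2 - 1) * (r - rC)) *
            (3 * (ν ^ 2 - 1) * (r - rp) ^ 2 +
              ((7 * ν ^ 2 - 3) * rp + (ν ^ 2 + 3) * rm - 4 * ν * s) * (r - rp) +
              (2 * ν * rp - s) ^ 2)) /
          (4 * Rsq r * (2 * ν * rp - s) ^ 2) := by
    intro r hX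
    have hXne : Rsq r ≠ 0 := ne_of_gt hX
    have hQ : Nθ r + ΩH =
        ((2 * ν * r - s) * (2 * ν * rp - s) - 4 * Rsq r) /
          (2 * Rsq r * (2 * ν * rp - s)) := by
      rw [hNθ r, hΩH]; field_simp; ring
    have hL : Rsq r * (Nθ r + ΩH) ^ 2 =
        ((2 * ν * r - s) * (2 * ν * rp - s) - 4 * Rsq r) ^ 2 /
          (4 * Rsq r * (2 * ν * rp - s) ^ 2) := by
      rw [hQ]; field_simp; ring
    have hN2 : Nsq r =
        ((ν ^ 2 + 3) * (r - rp) * (r - rm) * (2 * ν * rp - s) ^ 2) /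
          (4 * Rsq r * (2 * ν * rp - s) ^ 2) := by
      rw [hNsq r, mul_div_mul_right _ _ (pow_ne_zero 2 hDne)]
    rw [hL, hN2, div_sub_div_same]
    congr 1
    have hP : ((2 * ν * r - s) * (2 * ν * rp - s) - 4 * Rsq r) ^ 2 -
        (ν ^ 2 + 3) * (r - rp) * (r - rm) * (2 * ν * rp - s) ^ 2 =
        (r - rp) * (3 * (ν ^ 2 - 1) * r - (4 * ν ^ 2 * rp - (ν ^ 2 + 3) * rm)) *
          (3 * (ν ^ 2 - 1) * (r - rp) ^ 2 +
            ((7 * ν ^ 2 - 3) * rp + (ν ^ 2 + 3) * rm - 4 * ν * s) * (r - rp) +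
            (2 * ν * rp - s) ^ 2) := by
      rw [hR r]
      linear_combination (3 * rp * rm + ν ^ 2 * rp * rm - 4 * s * ν * rp + s ^ 2
        - 6 * r * rm - 6 * r * rp - 2 * r * ν ^ 2 * rm + 6 * r * ν ^ 2 * rp
        + 4 * r * s * ν + 6 * r ^ 2 - 6 * r ^ 2 * ν ^ 2) * hs2
    rw [h3B] at hP
    linear_combination hP
  -- K is positive for r > rp
  have hK : ∀ r : ℝ, rp < r →
      0 < 3 * (ν ^ 2 - 1) * (r - rp) ^ 2 +
        ((7 * ν ^ 2 - 3) * rp + (ν ^ 2 + 3) * rm - 4 * ν * s) * (r - rp) +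
        (2 * ν * rp - s) ^ 2 := by
    intro r hr
    have h1 : 0 < ((7 * ν ^ 2 - 3) * rp + (ν ^ 2 + 3) * rm - 4 * ν * s) * (r - rp) :=
      mul_pos hc (by linarith)
    nlinarith [sq_nonneg (r - rp), sq_nonneg (2 * ν * rp - s)]
  constructor
  · intro r hr hrC'
    have hX : 0 < Rsq r := hRpos r hr.le hrC'.le
    have hnum : (r - rp) * (3 * (ν ^ 2 - 1) * (r - rC)) *
        (3 * (ν ^ 2 - 1) * (r - rp) ^ 2 +
          ((7 * ν ^ 2 - 3) * rp + (ν ^ 2 + 3) * rm - 4 * ν * s) * (r - rp) +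
          (2 * ν * rp - s) ^ 2) < 0 :=
      mul_neg_of_neg_of_pos
        (mul_neg_of_pos_of_neg (by linarith)
          (mul_neg_of_pos_of_neg (by linarith) (by linarith)))
        (hK r hr)
    have h := div_neg_of_neg_of_pos hnum (by positivity :
      (0:ℝ) < 4 * Rsq r * (2 * ν * rp - s) ^ 2)
    rw [← main r hX] at h
    linarith
  · intro r hrC' hX
    have hr : rp < r := hCp.trans hrC'
    have hnum : 0 < (r - rp) * (3 * (ν ^ 2 - 1) * (r - rC)) *
        (3 * (ν ^ 2 - 1) * (r - rp) ^ 2 +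
          ((7 * ν ^ 2 - 3) * rp + (ν ^ 2 + 3) * rm - 4 * ν * s) * (r - rp) +
          (2 * ν * rp - s) ^ 2) :=
      mul_pos (mul_pos (by linarith) (mul_pos (by linarith) (by linarith))) (hK r hr)
    have h := div_pos hnum (by positivity :
      (0:ℝ) < 4 * Rsq r * (2 * ν * rp - s) ^ 2)
    rw [← main r hX] at h
    linarith
end

section
/- Let ν > 1 and 0 < r_− < r_+ be real numbers and s = √(r_+ r_− (ν²+3)). Then for every r ≥ r_+ with R²(r) > 0, one has R²(r)·(N^θ(r))² > N²(r); that is, the Killing vector ∂_t is spacelike everywhere on and outside the outer horizon, so the warped AdS₃ black hole spacetime has no static limit. -/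
/-- For the spacelike stretched warped AdS₃ black hole, the Killing vector `∂_t` is
spacelike everywhere on and outside the outer horizon: `R²(r)(N^θ(r))² > N²(r)` for all
`r ≥ r₊` with `R²(r) > 0`. Hence the spacetime has no static limit. -/
theorem no_static_limit
    (ν rm rp : ℝ) (hν : 1 < ν) (hrm : 0 < rm) (hrmp : rm < rp)
    (s : ℝ) (hs : s = Real.sqrt (rp * rm * (ν ^ 2 + 3)))
    (Rsq Nsq Nθ : ℝ → ℝ)
    (hR : ∀ r, Rsq r = (r / 4) * (3 * (ν ^ 2 - 1) * r + (ν ^ 2 + 3) * (rp + rm) - 4 * ν * s))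
    (hNsq : ∀ r, Nsq r = (ν ^ 2 + 3) * (r - rp) * (r - rm) / (4 * Rsq r))
    (hNθ : ∀ r, Nθ r = (2 * ν * r - s) / (2 * Rsq r)) :
    ∀ r, rp ≤ r → 0 < Rsq r → Nsq r < Rsq r * (Nθ r) ^ 2 := by
  intro r hr hRpos
  have hs2 : s ^ 2 = rp * rm * (ν ^ 2 + 3) := by
    rw [hs, Real.sq_sqrt]
    have : 0 ≤ rp := le_of_lt (hrm.trans hrmp)
    positivity
  have hne : Rsq r ≠ 0 := ne_of_gt hRpos
  have key : Rsq r * (Nθ r) ^ 2 - Nsq r = 1 := by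
    have hRr := hR r
    rw [hNsq, hNθ]
    field_simp
    nlinarith [hs2, hRr]
  linarith
end
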